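/- Let {γ_i}_{i=1}^d be an IFS of proper contractions on a compact metric space K with K = ⋃ γ_i(K), and let B = B(γ_1,…,γ_d) be the set of branched points. If x ∈ K \ B, then there exists an open neighborhood U_x of x such that: (i) U_x ∩ B = ∅; (ii) for every i ∈ I(x) and every j ≠ i, γ_j(γ_i^{-1}(U_x)) ∩ U_x = ∅; (iii) for every i ∉ I(x), U_x ∩ γ_i(K) = ∅. -/

import Mathlib

/-- the separation lemma for a non-branched point `x` of an IFS of proper
contractions on a compact metric space `K` (here the whole space) with `K = ⋃ γ i (K)`. -/
theorem ifs_separation_lemma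
    {K : Type*} [MetricSpace K] [CompactSpace K]
    (d : ℕ) (γ : Fin d → K → K)
    (c₁ c₂ : ℝ) (hc₁ : 0 < c₁) (hc₁₂ : c₁ ≤ c₂) (hc₂ : c₂ < 1)
    (hlow : ∀ i x y, c₁ * dist x y ≤ dist (γ i x) (γ i y))
    (hup : ∀ i x y, dist (γ i x) (γ i y) ≤ c₂ * dist x y)
    (hss : (Set.univ : Set K) = ⋃ i, Set.range (γ i))
    (B : Set K) (hB : B = {x : K | ∃ y : K, ∃ i j : Fin d, i ≠ j ∧ γ i y = x ∧ γ j y = x})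
    (x : K) (hx : x ∉ B) :
    ∃ U : Set K, IsOpen U ∧ x ∈ U ∧
      U ∩ B = ∅ ∧
      (∀ i : Fin d, x ∈ Set.range (γ i) →
        ∀ j : Fin d, j ≠ i → (γ j '' (γ i ⁻¹' U)) ∩ U = ∅) ∧
      (∀ i : Fin d, x ∉ Set.range (γ i) → U ∩ Set.range (γ i) = ∅) := by
  have hc₂0 : 0 ≤ c₂ := le_trans hc₁.le hc₁₂
  have hcont : ∀ i, Continuous (γ i) := by
    intro i
    refine (LipschitzWith.of_dist_le_mul (K := c₂.toNNReal) ?_).continuous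
    intro a b
    simpa [Real.coe_toNNReal c₂ hc₂0] using hup i a b
  -- the compact set of pairs (γ i z, γ j z) for i ≠ j
  set D : Set (K × K) := ⋃ p : {p : Fin d × Fin d // p.1 ≠ p.2},
      Set.range (fun z => (γ p.1.1 z, γ p.1.2 z)) with hD
  have hDcomp : IsCompact D := by
    apply isCompact_iUnion
    intro p
    exact isCompact_range (((hcont p.1.1).prodMk (hcont p.1.2)))
  have hDclosed : IsClosed D := hDcomp.isClosed
  have hxxD : (x, x) ∉ D := by
    intro h
    simp only [hD, Set.mem_iUnion, Set.mem_range] at h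
    obtain ⟨⟨⟨i, j⟩, hij⟩, z, hz⟩ := h
    exact hx (hB ▸ ⟨z, i, j, hij, congrArg Prod.fst hz, congrArg Prod.snd hz⟩)
  -- closedness of B and of the ranges
  have hBclosed : IsClosed B := by
    have : B = Prod.fst '' (D ∩ {p | p.1 = p.2}) := by
      ext w
      simp only [hB, Set.mem_setOf_eq, Set.mem_image, Set.mem_inter_iff, hD,
        Set.mem_iUnion, Set.mem_range]
      constructor
      · rintro ⟨y, i, j, hij, h1, h2⟩
        exact ⟨(w, w), ⟨⟨⟨⟨i, j⟩, hij⟩, y, by simp [h1, h2]⟩, rfl⟩, rfl⟩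
      · rintro ⟨⟨a, b⟩, ⟨⟨⟨⟨i, j⟩, hij⟩, z, hz⟩, hab⟩, rfl⟩
        obtain ⟨h1, h2⟩ := Prod.mk.injEq .. ▸ hz
        exact ⟨z, i, j, hij, h1, by simp_all⟩
    rw [this]
    exact ((hDcomp.inter_right (isClosed_eq continuous_fst continuous_snd)).image
      continuous_fst).isClosed
  set F : Set K := B ∪ ⋃ i ∈ {i : Fin d | x ∉ Set.range (γ i)}, Set.range (γ i) with hF
  have hFclosed : IsClosed F := by
    refine hBclosed.union ?_
    exact Set.Finite.isClosed_biUnion (Set.toFinite _)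
      (fun i _ => (isCompact_range (hcont i)).isClosed)
  have hxF : x ∉ F := by
    intro h
    rcases h with h | h
    · exact hx h
    · simp only [Set.mem_iUnion, Set.mem_setOf_eq] at h
      obtain ⟨i, hi, hmem⟩ := h
      exact hi hmem
  obtain ⟨ε₁, hε₁, hball₁⟩ := Metric.isOpen_iff.mp hFclosed.isOpen_compl x hxF
  obtain ⟨ε₂, hε₂, hball₂⟩ := Metric.isOpen_iff.mp hDclosed.isOpen_compl (x, x) hxxD
  set ε := min ε₁ ε₂ with hε
  refine ⟨Metric.ball x ε, Metric.isOpen_ball,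
    Metric.mem_ball_self (lt_min hε₁ hε₂), ?_, ?_, ?_⟩
  · apply Set.eq_empty_of_forall_notMem
    rintro w ⟨hw1, hw2⟩
    exact hball₁ (Metric.ball_subset_ball (min_le_left _ _) hw1) (Or.inl hw2)
  · intro i _ j hji
    apply Set.eq_empty_of_forall_notMem
    rintro w ⟨⟨z, hz1, rfl⟩, hz2⟩
    have hzU : γ i z ∈ Metric.ball x ε₂ := Metric.ball_subset_ball (min_le_right _ _) hz1
    have hwU : γ j z ∈ Metric.ball x ε₂ := Metric.ball_subset_ball (min_le_right _ _) hz2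
    have hmem : (γ i z, γ j z) ∈ Metric.ball ((x : K), (x : K)) ε₂ := by
      rw [← ball_prod_same]; exact ⟨hzU, hwU⟩
    refine hball₂ hmem ?_
    simp only [hD, Set.mem_iUnion, Set.mem_range]
    exact ⟨⟨(i, j), hji.symm⟩, z, rfl⟩
  · intro i hi
    apply Set.eq_empty_of_forall_notMem
    rintro w ⟨hw1, hw2⟩
    refine hball₁ (Metric.ball_subset_ball (min_le_left _ _) hw1) (Or.inr ?_)
    simp only [Set.mem_iUnion, Set.mem_setOf_eq]
    exact ⟨i, hi, hw2⟩
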